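/- (Energy convergence along stable sequences) Let y_n be stable at times s_n with s_n → t and y_n → y in Y, where W is lower semicontinuous, σ continuous, and D continuous with D(0)=0. Then W(y_n) − ⟨σ(s_n), y_n⟩ → W(y) − ⟨σ(t), y⟩; in particular W(y_n) → W(y). -/

import Mathlib

/-- Energy convergence along stable sequences. -/
theorem stmt5 {Y : Type*} [NormedAddCommGroup Y] [NormedSpace ℝ Y] [FiniteDimensional ℝ Y]
    (T : ℝ) (W : Y → ℝ) (hW : LowerSemicontinuous W)
    (σ : ℝ → Y →L[ℝ] ℝ) (hσ : Continuous σ)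
    (D : Y → ℝ) (hDc : Continuous D) (hDnn : ∀ a, 0 ≤ D a) (hD0 : D 0 = 0)
    (s : ℕ → ℝ) (y : ℕ → Y) (hs : ∀ k, s k ∈ Set.Icc 0 T)
    (hstab : ∀ k, ∀ yb : Y, W (y k) - σ (s k) (y k) ≤ W yb - σ (s k) yb + D (yb - y k))
    (t : ℝ) (yl : Y)
    (hst : Filter.Tendsto s Filter.atTop (nhds t))
    (hyl : Filter.Tendsto y Filter.atTop (nhds yl)) :
    Filter.Tendsto (fun k => W (y k) - σ (s k) (y k)) Filter.atTop (nhds (W yl - σ t yl)) ∧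
    Filter.Tendsto (fun k => W (y k)) Filter.atTop (nhds (W yl)) := by
  -- σ (s k) (y k) → σ t yl
  have hev : Filter.Tendsto (fun k => σ (s k) (y k)) Filter.atTop (nhds (σ t yl)) := by
    have h1 : Filter.Tendsto (fun k => (σ (s k), y k)) Filter.atTop (nhds (σ t, yl)) :=
      ((hσ.tendsto t).comp hst).prodMk_nhds hyl
    exact (isBoundedBilinearMap_apply.continuous.tendsto (σ t, yl)).comp h1
  -- σ (s k) yl → σ t yl
  have hev2 : Filter.Tendsto (fun k => σ (s k) yl) Filter.atTop (nhds (σ t yl)) := by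
    have h1 : Filter.Tendsto (fun k => (σ (s k), yl)) Filter.atTop (nhds (σ t, yl)) :=
      ((hσ.tendsto t).comp hst).prodMk_nhds tendsto_const_nhds
    exact (isBoundedBilinearMap_apply.continuous.tendsto (σ t, yl)).comp h1
  -- D (yl - y k) → 0
  have hD : Filter.Tendsto (fun k => D (yl - y k)) Filter.atTop (nhds 0) := by
    have : Filter.Tendsto (fun k => yl - y k) Filter.atTop (nhds (yl - yl)) :=
      tendsto_const_nhds.sub hyl
    rw [sub_self] at this
    simpa [hD0, Function.comp_def] using (hDc.tendsto 0).comp this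
  -- upper bound sequence
  have hg : Filter.Tendsto (fun k => W yl - σ (s k) yl + D (yl - y k) + σ (s k) (y k))
      Filter.atTop (nhds (W yl)) := by
    have hc : Filter.Tendsto (fun _ : ℕ => W yl) Filter.atTop (nhds (W yl)) :=
      tendsto_const_nhds
    have := ((hc.sub hev2).add hD).add hev
    simpa using this
  have hub : ∀ k, W (y k) ≤ W yl - σ (s k) yl + D (yl - y k) + σ (s k) (y k) := by
    intro k
    have := hstab k yl
    linarith
  have hWt : Filter.Tendsto (fun k => W (y k)) Filter.atTop (nhds (W yl)) := by
    refine tendsto_order.2 ⟨fun a ha => ?_, fun b hb => ?_⟩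
    · have := hW yl a ha
      exact hyl.eventually this
    · have h2 : ∀ᶠ k in Filter.atTop,
          W yl - σ (s k) yl + D (yl - y k) + σ (s k) (y k) < b :=
        hg.eventually_lt_const hb
      exact h2.mono fun k hk => lt_of_le_of_lt (hub k) hk
  exact ⟨hWt.sub hev, hWt⟩
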